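/- Let V be the return of the fixed-arm policy π^a in a single-type departing bandit with click probability P_a and departure probability L_a (so V ≤ N - 1 where N is geometric with parameter q := L_a(1-P_a)). Then the centered return V - E[V] is sub-exponential with parameters (τ², b) where τ = b = -8e / ln(1 - q); i.e., for all |γ| < 1/b, E[exp(γ(V - E[V]))] ≤ exp(γ²τ²/2). -/

import Mathlib

open MeasureTheory

lemma aux_exp_quad_nonpos {t : ℝ} (ht : t ≤ 0) : Real.exp t ≤ 1 + t + t^2/2 := by
  set G : ℝ → ℝ := fun s => 1 + s + s^2/2 - Real.exp s with hG
  have hd : ∀ s : ℝ, HasDerivAt G (1 + s - Real.exp s) s := by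
    intro s
    have h1 : HasDerivAt (fun s : ℝ => 1 + s) 1 s := (hasDerivAt_id s).const_add 1
    have h2 : HasDerivAt (fun s : ℝ => s^2/2) s s := by
      simpa using (hasDerivAt_pow 2 s).div_const 2
    have h3 : HasDerivAt Real.exp (Real.exp s) s := Real.hasDerivAt_exp s
    have := (h1.add h2).sub h3
    exact this
  have hanti : Antitone G := by
    apply antitone_of_deriv_nonpos
    · intro s; exact ((hd s).differentiableAt)
    · intro s
      rw [(hd s).deriv]
      have := Real.add_one_le_exp s
      linarith
  have h0 : G 0 = 0 := by simp [hG]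
  have := hanti ht
  rw [h0] at this
  simp only [hG] at this
  linarith

lemma aux_exp_quad_nonneg {t : ℝ} (ht : 0 ≤ t) :
    Real.exp t ≤ 1 + t + t^2/2 * Real.exp t := by
  set F1 : ℝ → ℝ := fun s => 1 + s * Real.exp s + s^2/2 * Real.exp s - Real.exp s with hF1def
  set F : ℝ → ℝ := fun s => 1 + s + s^2/2 * Real.exp s - Real.exp s with hFdef
  have hexp : ∀ s : ℝ, HasDerivAt Real.exp (Real.exp s) s := Real.hasDerivAt_exp
  have hsq : ∀ s : ℝ, HasDerivAt (fun s : ℝ => s^2/2) s s := by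
    intro s; simpa using (hasDerivAt_pow 2 s).div_const 2
  have hdF : ∀ s : ℝ, HasDerivAt F (F1 s) s := by
    intro s
    have h1 : HasDerivAt (fun s : ℝ => 1 + s) 1 s := (hasDerivAt_id s).const_add 1
    have h2 : HasDerivAt (fun s : ℝ => s^2/2 * Real.exp s)
        (s * Real.exp s + s^2/2 * Real.exp s) s := by
      have := (hsq s).mul (hexp s)
      exact this
    have := (h1.add h2).sub (hexp s)
    exact this.congr_deriv (by simp only [hF1def]; ring)
  have hdF1 : ∀ s : ℝ, HasDerivAt F1 ((2*s + s^2/2) * Real.exp s) s := by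
    intro s
    have h2 : HasDerivAt (fun s : ℝ => s * Real.exp s) (Real.exp s + s * Real.exp s) s := by
      have := (hasDerivAt_id s).mul (hexp s)
      exact this.congr_deriv (by simp [id_eq])
    have h3 : HasDerivAt (fun s : ℝ => s^2/2 * Real.exp s)
        (s * Real.exp s + s^2/2 * Real.exp s) s := by
      have := (hsq s).mul (hexp s)
      exact this
    have := ((h2.const_add 1).add h3).sub (hexp s)
    exact this.congr_deriv (by ring)
  have hF1mono : MonotoneOn F1 (Set.Ici (0:ℝ)) := by
    apply monotoneOn_of_deriv_nonneg (convex_Ici 0)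
    · exact fun s _ => ((hdF1 s).differentiableAt).continuousAt.continuousWithinAt
    · exact fun s _ => ((hdF1 s).differentiableAt).differentiableWithinAt
    · intro s hs
      rw [interior_Ici] at hs
      rw [(hdF1 s).deriv]
      have hs0 : (0:ℝ) < s := hs
      positivity
  have hF1nonneg : ∀ s ∈ Set.Ici (0:ℝ), 0 ≤ F1 s := by
    intro s hs
    have := hF1mono (Set.self_mem_Ici) hs hs
    simpa [hF1def] using this
  have hFmono : MonotoneOn F (Set.Ici (0:ℝ)) := by
    apply monotoneOn_of_deriv_nonneg (convex_Ici 0)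
    · exact fun s _ => ((hdF s).differentiableAt).continuousAt.continuousWithinAt
    · exact fun s _ => ((hdF s).differentiableAt).differentiableWithinAt
    · intro s hs
      rw [interior_Ici] at hs
      rw [(hdF s).deriv]
      exact hF1nonneg s (Set.mem_Ici.2 (le_of_lt (Set.mem_Ioi.1 hs)))
  have := hFmono (Set.self_mem_Ici) (Set.mem_Ici.2 ht) ht
  simp only [hFdef] at this
  simp at this
  linarith

lemma aux_exp_taylor (t : ℝ) : Real.exp t ≤ 1 + t + t^2/2 * Real.exp |t| := by
  rcases le_or_gt t 0 with ht | ht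
  · have h2 := aux_exp_quad_nonpos ht
    have h3 : (1:ℝ) ≤ Real.exp |t| := Real.one_le_exp (abs_nonneg t)
    nlinarith [sq_nonneg t]
  · rw [abs_of_pos ht]
    exact aux_exp_quad_nonneg ht.le

lemma aux_sq_exp {β x : ℝ} (hβ : 0 < β) (hx : 0 ≤ x) :
    x^2 * Real.exp (-(β*x)) ≤ (2/(Real.exp 1*β))^2 := by
  have e1 : Real.exp (β*x/2) * Real.exp (-(β*x)/2) = 1 := by
    have h0 : β*x/2 + -(β*x)/2 = 0 := by ring
    rw [← Real.exp_add, h0, Real.exp_zero]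
  have hu : β*x/2 * Real.exp 1 ≤ Real.exp (β*x/2) := by
    have h := Real.add_one_le_exp (β*x/2 - 1)
    have h2 : β*x/2 ≤ Real.exp (β*x/2 - 1) := by linarith
    calc β*x/2 * Real.exp 1 ≤ Real.exp (β*x/2 - 1) * Real.exp 1 :=
          mul_le_mul_of_nonneg_right h2 (Real.exp_pos 1).le
      _ = Real.exp (β*x/2) := by rw [← Real.exp_add]; ring_nf
  have hpos : (0:ℝ) < Real.exp (-(β*x)/2) := Real.exp_pos _
  have key : β*x/2 * Real.exp 1 * Real.exp (-(β*x)/2) ≤ 1 := by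
    calc β*x/2 * Real.exp 1 * Real.exp (-(β*x)/2)
        ≤ Real.exp (β*x/2) * Real.exp (-(β*x)/2) :=
          mul_le_mul_of_nonneg_right hu hpos.le
      _ = 1 := e1
  have h1 : x * Real.exp (-(β*x)/2) ≤ 2/(Real.exp 1*β) := by
    rw [le_div_iff₀ (by positivity)]
    nlinarith [key]
  have hsq : x^2 * Real.exp (-(β*x)) = (x * Real.exp (-(β*x)/2))^2 := by
    have h0 : Real.exp (-(β*x)/2)^2 = Real.exp (-(β*x)) := by
      rw [pow_two, ← Real.exp_add]; congr 1; ring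
    rw [mul_pow, h0]
  rw [hsq]
  have hxe : 0 ≤ x * Real.exp (-(β*x)/2) := by positivity
  exact pow_le_pow_left₀ hxe h1 2

lemma aux_layer {Ω : Type*} [MeasurableSpace Ω] (μ : Measure Ω)
    (U : Ω → ℝ) (hU : Measurable U) (a : ℕ → ENNReal) :
    ∫⁻ ω, ∑ j ∈ Finset.range ⌈U ω⌉₊, a j ∂μ
      = ∑' j : ℕ, a j * μ {ω | (j:ℝ) < U ω} := by
  have hmeas : ∀ j : ℕ, MeasurableSet {ω | (j:ℝ) < U ω} :=
    fun j => measurableSet_lt measurable_const hU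
  have h1 : ∀ ω, ∑ j ∈ Finset.range ⌈U ω⌉₊, a j
      = ∑' j : ℕ, Set.indicator {ω' | (j:ℝ) < U ω'} (fun _ => a j) ω := by
    intro ω
    rw [tsum_eq_sum (s := Finset.range ⌈U ω⌉₊)]
    · apply Finset.sum_congr rfl
      intro j hj
      rw [Finset.mem_range, Nat.lt_ceil] at hj
      have hjm : ω ∈ {ω' | (j:ℝ) < U ω'} := hj
      rw [Set.indicator_of_mem hjm]
    · intro j hj
      rw [Finset.mem_range, Nat.lt_ceil] at hj
      have hjm : ω ∉ {ω' | (j:ℝ) < U ω'} := hj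
      exact Set.indicator_of_notMem hjm _
  calc ∫⁻ ω, ∑ j ∈ Finset.range ⌈U ω⌉₊, a j ∂μ
      = ∫⁻ ω, ∑' j : ℕ, Set.indicator {ω' | (j:ℝ) < U ω'} (fun _ => a j) ω ∂μ := by
        exact lintegral_congr h1
    _ = ∑' j : ℕ, ∫⁻ ω, Set.indicator {ω' | (j:ℝ) < U ω'} (fun _ => a j) ω ∂μ :=
        lintegral_tsum (fun j => (measurable_const.indicator (hmeas j)).aemeasurable)
    _ = ∑' j : ℕ, a j * μ {ω | (j:ℝ) < U ω} := by
        congr 1; funext j; exact lintegral_indicator_const (hmeas j) _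


set_option maxHeartbeats 2000000 in
/-- Let `V` be the return of a fixed-arm policy in a single-type
departing bandit: `0 ≤ V ≤ N - 1` where `N` is geometric with parameter
`q = L_a (1-P_a) ∈ (0,1)`.  Then the centered return `V - E[V]` is
`(τ², b)`-sub-exponential with `τ = b = -8e / ln(1-q)`: for all `|γ| < 1/b`,
`E[exp(γ (V - E[V]))] ≤ exp(γ² τ² / 2)`. -/
theorem return_is_subexponential {Ω : Type*} [MeasurableSpace Ω]
    (μ : Measure Ω) [IsProbabilityMeasure μ]
    (q : ℝ) (hq : q ∈ Set.Ioo (0 : ℝ) 1)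
    (N : Ω → ℕ) (V : Ω → ℝ)
    (hgeo : ∀ n : ℕ, 1 ≤ n →
      μ {ω | N ω = n} = ENNReal.ofReal ((1 - q) ^ (n - 1) * q))
    (hV : ∀ ω, 0 ≤ V ω ∧ V ω ≤ (N ω : ℝ) - 1) :
    ∀ γ : ℝ, |γ| < 1 / (-8 * Real.exp 1 / Real.log (1 - q)) →
      ∫ ω, Real.exp (γ * (V ω - ∫ ω', V ω' ∂μ)) ∂μ
        ≤ Real.exp (γ ^ 2 * (-8 * Real.exp 1 / Real.log (1 - q)) ^ 2 / 2) := by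
  obtain ⟨hq0, hq1⟩ := hq
  have h1q0 : (0:ℝ) < 1 - q := by linarith
  have h1q1 : 1 - q < 1 := by linarith
  have hlogneg : Real.log (1 - q) < 0 := Real.log_neg h1q0 h1q1
  set c : ℝ := -Real.log (1 - q) with hcdef
  clear_value c
  have hc : 0 < c := by simp only [hcdef]; linarith
  have hlc : Real.log (1 - q) = -c := by rw [hcdef, neg_neg]
  have hexpc : Real.exp (-c) = 1 - q := by
    rw [hcdef, neg_neg, Real.exp_log h1q0]
  have hb1 : -8 * Real.exp 1 / Real.log (1 - q) = 8 * Real.exp 1 / c := by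
    rw [hlc, div_neg]; ring
  have he1 : (2:ℝ) ≤ Real.exp 1 := by have := Real.add_one_le_exp 1; linarith
  have h8e : (0:ℝ) < 8 * Real.exp 1 := by positivity
  intro γ hγ
  rw [hb1] at hγ ⊢
  rw [one_div_div] at hγ
  -- hγ : |γ| < c / (8 * Real.exp 1)
  set m := ∫ ω', V ω' ∂μ with hm
  clear_value m
  rcases eq_or_ne γ 0 with rfl | hγ0
  · simp
  by_cases hfm : AEStronglyMeasurable (fun ω => Real.exp (γ * (V ω - m))) μ
  swap
  · rw [integral_non_aestronglyMeasurable hfm]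
    exact (Real.exp_pos _).le
  have hVae : AEMeasurable V μ := by
    have hf : AEMeasurable (fun ω => Real.exp (γ * (V ω - m))) μ := hfm.aemeasurable
    have hlog : AEMeasurable (fun ω => Real.log (Real.exp (γ * (V ω - m)))) μ :=
      Real.measurable_log.comp_aemeasurable hf
    have heq : (fun ω => Real.log (Real.exp (γ * (V ω - m))) / γ + m) = V := by
      funext ω; rw [Real.log_exp]; field_simp; ring
    rw [← heq]
    exact (hlog.div_const γ).add_const m
  obtain ⟨Vk, hVk_meas, hVk_ae⟩ := hVae
  -- geometric sums
  have hsumgeo : Summable (fun n : ℕ => (1-q)^n) := summable_geometric_of_lt_one h1q0.le h1q1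
  have htsumgeo : ∑' n : ℕ, (1-q)^n = q⁻¹ := by
    rw [tsum_geometric_of_lt_one h1q0.le h1q1]
    congr 1; ring
  -- tail bound
  have htail : ∀ j : ℕ, μ {ω | (j:ℝ) < Vk ω} ≤ ENNReal.ofReal ((1-q)^(j+1)) := by
    intro j
    have hnull : μ {ω | ¬ V ω = Vk ω} = 0 := by
      have h := hVk_ae
      rwa [Filter.EventuallyEq, ae_iff] at h
    have hsub : {ω | (j:ℝ) < Vk ω} ⊆
        {ω | ¬ V ω = Vk ω} ∪ ⋃ n : ℕ, {ω | N ω = j+2+n} := by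
      intro ω hω
      by_cases he : V ω = Vk ω
      · right
        have h1 := (hV ω).2
        have h2 : (j:ℝ) < (N ω : ℝ) - 1 := lt_of_lt_of_le (he ▸ hω) h1
        have h3 : j + 2 ≤ N ω := by
          have h4 : ((j:ℝ) + 1) < (N ω : ℝ) := by linarith
          have h5 : ((j + 1 : ℕ) : ℝ) < ((N ω : ℕ) : ℝ) := by push_cast; linarith
          have h6 : j + 1 < N ω := by exact_mod_cast h5
          omega
        refine Set.mem_iUnion.2 ⟨N ω - (j+2), ?_⟩
        simp only [Set.mem_setOf_eq]
        omega
      · left; exact he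
    calc μ {ω | (j:ℝ) < Vk ω}
        ≤ μ ({ω | ¬ V ω = Vk ω} ∪ ⋃ n : ℕ, {ω | N ω = j+2+n}) := measure_mono hsub
      _ ≤ μ {ω | ¬ V ω = Vk ω} + μ (⋃ n : ℕ, {ω | N ω = j+2+n}) := measure_union_le _ _
      _ = μ (⋃ n : ℕ, {ω | N ω = j+2+n}) := by rw [hnull, zero_add]
      _ ≤ ∑' n : ℕ, μ {ω | N ω = j+2+n} := measure_iUnion_le _
      _ = ∑' n : ℕ, ENNReal.ofReal ((1-q)^(j+1) * q * (1-q)^n) := by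
          apply tsum_congr; intro n
          rw [hgeo (j+2+n) (by omega)]
          congr 1
          rw [show j+2+n-1 = (j+1)+n by omega, pow_add]; ring
      _ = ENNReal.ofReal (∑' n : ℕ, (1-q)^(j+1) * q * (1-q)^n) :=
          (ENNReal.ofReal_tsum_of_nonneg
            (fun n => mul_nonneg (mul_nonneg (pow_nonneg h1q0.le _) hq0.le) (pow_nonneg h1q0.le _))
            (hsumgeo.mul_left _)).symm
      _ = ENNReal.ofReal ((1-q)^(j+1)) := by
          rw [tsum_mul_left, htsumgeo]
          congr 1
          field_simp
  have hlayer := fun a => aux_layer μ Vk hVk_meas a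
  -- mean bound
  have hsum1 : Summable (fun j : ℕ => (1-q)^(j+1)) := by
    have : (fun j : ℕ => (1-q)^(j+1)) = fun j => (1-q) * (1-q)^j := by
      funext j; rw [pow_succ]; ring
    rw [this]; exact hsumgeo.mul_left _
  have htsum1 : ∑' j : ℕ, (1-q)^(j+1) = (1-q)/q := by
    have h : (fun j : ℕ => (1-q)^(j+1)) = fun j => (1-q) * (1-q)^j := by
      funext j; rw [pow_succ]; ring
    rw [h, tsum_mul_left, htsumgeo, div_eq_mul_inv]
  have hmean_l : ∫⁻ ω, ENNReal.ofReal (Vk ω) ∂μ ≤ ENNReal.ofReal ((1-q)/q) := by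
    have hpt : ∀ ω, ENNReal.ofReal (Vk ω) ≤ ∑ j ∈ Finset.range ⌈Vk ω⌉₊, (1:ENNReal) := by
      intro ω
      rw [Finset.sum_const, Finset.card_range, nsmul_eq_mul, mul_one]
      calc ENNReal.ofReal (Vk ω) ≤ ENNReal.ofReal ((⌈Vk ω⌉₊:ℝ)) :=
            ENNReal.ofReal_le_ofReal (Nat.le_ceil _)
        _ = (⌈Vk ω⌉₊ : ENNReal) := ENNReal.ofReal_natCast _
    calc ∫⁻ ω, ENNReal.ofReal (Vk ω) ∂μ
        ≤ ∫⁻ ω, ∑ j ∈ Finset.range ⌈Vk ω⌉₊, (1:ENNReal) ∂μ := lintegral_mono hpt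
      _ = ∑' j : ℕ, 1 * μ {ω | (j:ℝ) < Vk ω} := hlayer _
      _ ≤ ∑' j : ℕ, ENNReal.ofReal ((1-q)^(j+1)) :=
          Summable.tsum_le_tsum (fun j => by rw [one_mul]; exact htail j) ENNReal.summable ENNReal.summable
      _ = ENNReal.ofReal (∑' j : ℕ, (1-q)^(j+1)) :=
          (ENNReal.ofReal_tsum_of_nonneg (fun n => pow_nonneg h1q0.le _) hsum1).symm
      _ = ENNReal.ofReal ((1-q)/q) := by rw [htsum1]
  have hVk_nonneg : ∀ᵐ ω ∂μ, 0 ≤ Vk ω := by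
    filter_upwards [hVk_ae] with ω h using h ▸ (hV ω).1
  have hVk_int : Integrable Vk μ := by
    refine ⟨hVk_meas.aestronglyMeasurable, ?_⟩
    rw [hasFiniteIntegral_iff_ofReal hVk_nonneg]
    exact lt_of_le_of_lt hmean_l ENNReal.ofReal_lt_top
  have hV_int : Integrable V μ := hVk_int.congr hVk_ae.symm
  have hm_eq : m = ∫ ω, Vk ω ∂μ := by rw [hm]; exact integral_congr_ae hVk_ae
  have hm0 : 0 ≤ m := by
    rw [hm]; exact integral_nonneg (fun ω => (hV ω).1)
  have hm1 : m ≤ (1-q)/q := by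
    rw [hm_eq, integral_eq_lintegral_of_nonneg_ae hVk_nonneg hVk_meas.aestronglyMeasurable]
    exact ENNReal.toReal_le_of_le_ofReal (div_nonneg h1q0.le hq0.le) hmean_l
  have hcq : c * (1-q) ≤ q := by
    have h := Real.add_one_le_exp c
    have hec : Real.exp c = (1-q)⁻¹ := by
      rw [hcdef, Real.exp_neg, Real.exp_log h1q0]
    rw [hec] at h
    have h2 := mul_le_mul_of_nonneg_right h h1q0.le
    rw [inv_mul_cancel₀ h1q0.ne'] at h2
    linarith [h2]
  have hcm : c * m ≤ 1 := by
    have h2 : c * m ≤ c * ((1-q)/q) := mul_le_mul_of_nonneg_left hm1 hc.le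
    have h3 : c * ((1-q)/q) ≤ 1 := by
      rw [mul_div_assoc', div_le_one hq0]; exact hcq
    exact le_trans h2 h3
  -- the exponential-moment function of the ceiling
  set r : ℝ := Real.exp (-(c/2)) with hrdef
  clear_value r
  have hr0 : 0 < r := by rw [hrdef]; exact Real.exp_pos _
  have hr1 : r < 1 := by rw [hrdef]; exact Real.exp_lt_one_iff.2 (by linarith)
  set d : ℕ → ℝ := fun j => Real.exp (c*(j+1)/2) - Real.exp (c*(j:ℝ)/2) with hddef
  clear_value d
  have hd0 : ∀ j, 0 ≤ d j := by
    intro j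
    have h : c*(j:ℝ)/2 ≤ c*((j:ℝ)+1)/2 := by linarith [hc.le]
    simp only [hddef, sub_nonneg]
    exact Real.exp_le_exp.2 h
  have hGpt : ∀ n : ℕ, Real.exp (c/2*(n:ℝ)) = 1 + ∑ j ∈ Finset.range n, d j := by
    intro n
    have hts := Finset.sum_range_sub (f := fun j : ℕ => Real.exp (c*(j:ℝ)/2)) n
    have hde : ∀ j ∈ Finset.range n, d j
        = Real.exp (c*((j+1:ℕ):ℝ)/2) - Real.exp (c*(j:ℝ)/2) := by
      intro j _
      simp only [hddef]
      congr 2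
      push_cast; ring
    rw [Finset.sum_congr rfl hde, hts]
    have h0 : c*((0:ℕ):ℝ)/2 = 0 := by norm_num
    rw [h0, Real.exp_zero, show c/2*(n:ℝ) = c*(n:ℝ)/2 from by ring]
    ring
  have hpow : ∀ k : ℕ, (1-q)^k = Real.exp (-(c*(k:ℝ))) := by
    intro k
    rw [← hexpc, ← Real.exp_nat_mul]
    congr 1; ring
  have hrpow : ∀ k : ℕ, r^k = Real.exp (-(c*(k:ℝ)/2)) := by
    intro k
    rw [hrdef, ← Real.exp_nat_mul]
    congr 1; ring
  have hprod : ∀ j : ℕ, d j * (1-q)^(j+1) = (1-r)*r*r^j := by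
    intro j
    have h1 : (1-r)*r*r^j = r^(j+1) - r^(j+2) := by ring
    rw [h1, hpow (j+1), hrpow (j+1), hrpow (j+2)]
    simp only [hddef]
    rw [sub_mul, ← Real.exp_add, ← Real.exp_add]
    congr 2 <;> push_cast <;> ring
  have hGl : ∫⁻ ω, ENNReal.ofReal (Real.exp (c/2 * (⌈Vk ω⌉₊:ℝ))) ∂μ ≤ 2 := by
    have hpt : ∀ ω, ENNReal.ofReal (Real.exp (c/2 * (⌈Vk ω⌉₊:ℝ)))
        = 1 + ∑ j ∈ Finset.range ⌈Vk ω⌉₊, ENNReal.ofReal (d j) := by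
      intro ω
      rw [hGpt ⌈Vk ω⌉₊,
        ENNReal.ofReal_add (by norm_num) (Finset.sum_nonneg fun j _ => hd0 j),
        ENNReal.ofReal_one, ENNReal.ofReal_sum_of_nonneg (fun j _ => hd0 j)]
    have hsumr : Summable (fun j : ℕ => (1-r)*r*r^j) :=
      (summable_geometric_of_lt_one hr0.le hr1).mul_left _
    calc ∫⁻ ω, ENNReal.ofReal (Real.exp (c/2 * (⌈Vk ω⌉₊:ℝ))) ∂μ
        = ∫⁻ ω, (1 + ∑ j ∈ Finset.range ⌈Vk ω⌉₊, ENNReal.ofReal (d j)) ∂μ :=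
          lintegral_congr hpt
      _ = ∫⁻ _, (1:ENNReal) ∂μ + ∫⁻ ω, ∑ j ∈ Finset.range ⌈Vk ω⌉₊, ENNReal.ofReal (d j) ∂μ :=
          lintegral_add_left measurable_const _
      _ = 1 + ∑' j : ℕ, ENNReal.ofReal (d j) * μ {ω | (j:ℝ) < Vk ω} := by
          rw [lintegral_one, measure_univ, hlayer]
      _ ≤ 1 + ∑' j : ℕ, ENNReal.ofReal (d j) * ENNReal.ofReal ((1-q)^(j+1)) :=
          add_le_add_right (Summable.tsum_le_tsum (fun j => mul_le_mul_right (htail j) _)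
            ENNReal.summable ENNReal.summable) 1
      _ = 1 + ∑' j : ℕ, ENNReal.ofReal ((1-r)*r*r^j) := by
          congr 1
          apply tsum_congr; intro j
          rw [← ENNReal.ofReal_mul (hd0 j), hprod j]
      _ = 1 + ENNReal.ofReal ((1-r)*r*(1-r)⁻¹) := by
          rw [← ENNReal.ofReal_tsum_of_nonneg
            (fun j => mul_nonneg (mul_nonneg (by linarith) hr0.le) (pow_nonneg hr0.le _)) hsumr,
            tsum_mul_left, tsum_geometric_of_lt_one hr0.le hr1]
      _ ≤ 2 := by
          have hrne : 1 - r ≠ 0 := by linarith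
          rw [show (1-r)*r*(1-r)⁻¹ = r by field_simp]
          have : ENNReal.ofReal r ≤ 1 := ENNReal.ofReal_le_one.2 hr1.le
          calc (1:ENNReal) + ENNReal.ofReal r ≤ 1 + 1 := add_le_add_right this 1
            _ = 2 := by norm_num
  have hWmono : Monotone (fun x : ℝ => ((⌈x⌉₊ : ℕ):ℝ)) := by
    intro a b hab
    show ((⌈a⌉₊:ℕ):ℝ) ≤ ((⌈b⌉₊:ℕ):ℝ)
    exact_mod_cast Nat.ceil_le_ceil hab
  have hWmeas : Measurable (fun ω => (⌈Vk ω⌉₊:ℝ)) := hWmono.measurable.comp hVk_meas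
  have hGmeas : Measurable (fun ω => Real.exp (c/2 * (⌈Vk ω⌉₊:ℝ))) :=
    Real.measurable_exp.comp (hWmeas.const_mul (c/2))
  have hGint : Integrable (fun ω => Real.exp (c/2 * (⌈Vk ω⌉₊:ℝ))) μ := by
    refine ⟨hGmeas.aestronglyMeasurable, ?_⟩
    rw [hasFiniteIntegral_iff_ofReal (Filter.Eventually.of_forall fun ω => (Real.exp_pos _).le)]
    exact lt_of_le_of_lt hGl (by norm_num)
  have hGmean : ∫ ω, Real.exp (c/2 * (⌈Vk ω⌉₊:ℝ)) ∂μ ≤ 2 := by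
    rw [integral_eq_lintegral_of_nonneg_ae
      (Filter.Eventually.of_forall fun ω => (Real.exp_pos _).le) hGmeas.aestronglyMeasurable]
    have h2 : (2:ENNReal) = ENNReal.ofReal 2 := by norm_num
    exact ENNReal.toReal_le_of_le_ofReal (by norm_num) (h2 ▸ hGl)
  -- final assembly
  set β : ℝ := c/2 - |γ| with hβdef
  clear_value β
  have hβpos : 0 < β := by
    have h1 : c/(8*Real.exp 1) ≤ c/2 := by
      rw [div_le_div_iff₀ h8e (by norm_num)]
      have h2 := mul_nonneg hc.le (show (0:ℝ) ≤ 8*Real.exp 1 - 2 by linarith)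
      linarith [h2]
    simp only [hβdef]
    linarith
  set K : ℝ := Real.exp (1/2) * (2/(Real.exp 1 * β))^2 with hKdef
  clear_value K
  have hK0 : 0 ≤ K := by rw [hKdef]; positivity
  have hfg : ∀ᵐ ω ∂μ, Real.exp (γ*(V ω - m))
      ≤ 1 + γ*(Vk ω - m) + γ^2/2 * (K * Real.exp (c/2*(⌈Vk ω⌉₊:ℝ))) := by
    filter_upwards [hVk_ae] with ω hω
    rw [hω]
    set x := Vk ω with hxdef
    clear_value x
    have hx0 : 0 ≤ x := hω ▸ (hV ω).1
    have t1 := aux_exp_taylor (γ*(x-m))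
    have h2 : |x - m| ≤ x + m := abs_le.2 ⟨by linarith, by linarith⟩
    have h3 : (x-m)^2 ≤ (x+m)^2 := sq_le_sq' (by linarith) (by linarith)
    have h4 : Real.exp (|γ| * |x - m|) ≤ Real.exp (|γ| * (x+m)) :=
      Real.exp_le_exp.2 (mul_le_mul_of_nonneg_left h2 (abs_nonneg γ))
    have h5 : Real.exp (|γ| * (x+m)) = Real.exp (-(β*(x+m))) * Real.exp (c/2*(x+m)) := by
      rw [← Real.exp_add]; congr 1; simp only [hβdef]; ring
    have h6 : (x+m)^2 * Real.exp (-(β*(x+m))) ≤ (2/(Real.exp 1*β))^2 :=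
      aux_sq_exp hβpos (by linarith)
    have h7 : Real.exp (c/2*(x+m)) ≤ Real.exp (1/2) * Real.exp (c/2*(⌈x⌉₊:ℝ)) := by
      rw [← Real.exp_add]
      apply Real.exp_le_exp.2
      have hxc : x ≤ (⌈x⌉₊:ℝ) := Nat.le_ceil x
      have hcx := mul_le_mul_of_nonneg_left hxc hc.le
      linarith [hcm, hcx]
    have key : (x-m)^2 * Real.exp (|γ| * |x - m|) ≤ K * Real.exp (c/2*(⌈x⌉₊:ℝ)) := by
      calc (x-m)^2 * Real.exp (|γ| * |x - m|)
          ≤ (x+m)^2 * Real.exp (|γ| * (x+m)) :=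
            mul_le_mul h3 h4 (Real.exp_pos _).le (sq_nonneg _)
        _ = ((x+m)^2 * Real.exp (-(β*(x+m)))) * Real.exp (c/2*(x+m)) := by
            rw [h5]; ring
        _ ≤ (2/(Real.exp 1*β))^2 * (Real.exp (1/2) * Real.exp (c/2*(⌈x⌉₊:ℝ))) :=
            mul_le_mul h6 h7 (Real.exp_pos _).le (by positivity)
        _ = K * Real.exp (c/2*(⌈x⌉₊:ℝ)) := by rw [hKdef]; ring
    have expand : (γ*(x-m))^2/2 * Real.exp |γ*(x-m)|
        = γ^2/2 * ((x-m)^2 * Real.exp (|γ| * |x - m|)) := by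
      rw [abs_mul]; ring
    rw [expand] at t1
    have hmul := mul_le_mul_of_nonneg_left key (by positivity : (0:ℝ) ≤ γ^2/2)
    linarith
  have hI1 : Integrable (fun ω => γ*(Vk ω - m)) μ :=
    (hVk_int.sub (integrable_const m)).const_mul γ
  have hI2 : Integrable (fun ω => γ^2/2 * (K * Real.exp (c/2*(⌈Vk ω⌉₊:ℝ)))) μ :=
    (hGint.const_mul K).const_mul (γ^2/2)
  have hf1 : Integrable (fun ω => 1 + γ*(Vk ω - m)) μ := (integrable_const 1).add hI1
  have hg_int : Integrable
      (fun ω => 1 + γ*(Vk ω - m) + γ^2/2 * (K * Real.exp (c/2*(⌈Vk ω⌉₊:ℝ)))) μ :=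
    hf1.add hI2
  have hle1 : ∫ ω, Real.exp (γ*(V ω - m)) ∂μ
      ≤ ∫ ω, (1 + γ*(Vk ω - m) + γ^2/2 * (K * Real.exp (c/2*(⌈Vk ω⌉₊:ℝ)))) ∂μ :=
    integral_mono_of_nonneg (Filter.Eventually.of_forall fun ω => (Real.exp_pos _).le) hg_int hfg
  have heval : ∫ ω, (1 + γ*(Vk ω - m) + γ^2/2 * (K * Real.exp (c/2*(⌈Vk ω⌉₊:ℝ)))) ∂μ
      = 1 + γ^2/2 * (K * ∫ ω, Real.exp (c/2*(⌈Vk ω⌉₊:ℝ)) ∂μ) := by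
    rw [integral_add hf1 hI2,
      integral_add (integrable_const 1) hI1,
      integral_const, integral_const_mul, integral_sub hVk_int (integrable_const m),
      integral_const, integral_const_mul, integral_const_mul]
    simp only [probReal_univ, measure_univ, ENNReal.toReal_one, one_smul, smul_eq_mul, one_mul]
    rw [← hm_eq, sub_self, mul_zero, add_zero]
  have hle2 : ∫ ω, (1 + γ*(Vk ω - m) + γ^2/2 * (K * Real.exp (c/2*(⌈Vk ω⌉₊:ℝ)))) ∂μ
      ≤ 1 + γ^2 * K := by
    rw [heval]
    have hKG : K * ∫ ω, Real.exp (c/2*(⌈Vk ω⌉₊:ℝ)) ∂μ ≤ K * 2 :=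
      mul_le_mul_of_nonneg_left hGmean hK0
    have h := mul_le_mul_of_nonneg_left hKG (by positivity : (0:ℝ) ≤ γ^2/2)
    linarith [h]
  have hKbound : K ≤ (8*Real.exp 1/c)^2/2 := by
    have hs1 : Real.exp (1/2) ≤ Real.exp 1 := Real.exp_le_exp.2 (by norm_num)
    have h9 : |γ| * (8*Real.exp 1) < c := (lt_div_iff₀ h8e).1 hγ
    have hβlb : c*(4*Real.exp 1 - 1) ≤ 8*Real.exp 1*β := by
      simp only [hβdef]
      linarith [h9]
    have hKle : K ≤ Real.exp 1 * (2/(Real.exp 1 * β))^2 := by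
      rw [hKdef]; exact mul_le_mul_of_nonneg_right hs1 (sq_nonneg _)
    have hrw1 : Real.exp 1 * (2/(Real.exp 1 * β))^2 = 4*Real.exp 1/(Real.exp 1*β)^2 := by
      ring
    have hrw2 : (8*Real.exp 1/c)^2/2 = 32*(Real.exp 1)^2/c^2 := by ring
    have hfin : 4*Real.exp 1/(Real.exp 1*β)^2 ≤ 32*(Real.exp 1)^2/c^2 := by
      rw [div_le_div_iff₀ (by positivity) (by positivity)]
      have h7c : 7*c ≤ 8*Real.exp 1*β := by
        have hh := mul_nonneg hc.le (show (0:ℝ) ≤ 4*Real.exp 1 - 8 by linarith)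
        linarith [hβlb, hh]
      have h7c2 : (7*c)*(7*c) ≤ (8*Real.exp 1*β)*(8*Real.exp 1*β) :=
        mul_self_le_mul_self (by positivity) h7c
      have hA : 49*(Real.exp 1*c^2) ≤ 64*(Real.exp 1^3*β^2) := by
        have h := mul_le_mul_of_nonneg_left h7c2 (Real.exp_pos 1).le
        linarith [h]
      have hkey : 0 ≤ 32*(Real.exp 1)^3*β^2*(Real.exp 1 - 2) :=
        mul_nonneg (by positivity) (by linarith)
      have hnn : (0:ℝ) ≤ (Real.exp 1)^3*β^2 :=
        mul_nonneg (pow_nonneg (Real.exp_pos 1).le 3) (sq_nonneg β)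
      linarith [hA, hkey, hnn]
    calc K ≤ Real.exp 1 * (2/(Real.exp 1 * β))^2 := hKle
      _ = 4*Real.exp 1/(Real.exp 1*β)^2 := hrw1
      _ ≤ 32*(Real.exp 1)^2/c^2 := hfin
      _ = (8*Real.exp 1/c)^2/2 := hrw2.symm
  calc ∫ ω, Real.exp (γ*(V ω - m)) ∂μ
      ≤ ∫ ω, (1 + γ*(Vk ω - m) + γ^2/2 * (K * Real.exp (c/2*(⌈Vk ω⌉₊:ℝ)))) ∂μ := hle1
    _ ≤ 1 + γ^2 * K := hle2
    _ ≤ Real.exp (γ^2 * K) := by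
        have := Real.add_one_le_exp (γ^2 * K); linarith
    _ ≤ Real.exp (γ^2 * (8*Real.exp 1/c)^2/2) := by
        apply Real.exp_le_exp.2
        have := mul_le_mul_of_nonneg_left hKbound (sq_nonneg γ)
        linarith
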